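/- Let n be large, a_0 = ⌊(1 − 1/e)n⌋, and a_{j+1} = n mod a_j. Define b_0 = (1 − 1/e)n and b_k = (-1)^k k! (Σ_{j=0}^k (-1)^j/j! − 1/e)·n for k ≥ 1. Then for every k ≤ c·(log n)/(log log n) (for a suitable absolute constant c > 0), one has |a_k − b_k| ≤ k! and a_{k+1} = n − (k+1)·a_k; in particular a_k > n/(k+2) > 0. -/

import Mathlib

/-- The iteration `a_0 = a`, `a_{j+1} = n mod a_j`. -/
def pseq (n a : ℕ) : ℕ → ℕ
  | 0 => a
  | j + 1 => n % pseq n a j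

noncomputable def bseq (n : ℕ) : ℕ → ℝ
  | 0 => (1 - Real.exp (-1)) * n
  | k + 1 => (-1 : ℝ) ^ (k + 1) * (Nat.factorial (k + 1)) *
      ((∑ j ∈ Finset.range (k + 2), (-1 : ℝ) ^ j / (Nat.factorial j)) - Real.exp (-1)) * n

noncomputable def tseq (m : ℕ) : ℝ :=
  (-1) ^ m * (Nat.factorial m) *
    ((∑ j ∈ Finset.range (m + 1), (-1 : ℝ) ^ j / (Nat.factorial j)) - Real.exp (-1))

lemma tseq_zero : tseq 0 = 1 - Real.exp (-1) := by
  simp [tseq]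

lemma bseq_eq (n : ℕ) (m : ℕ) : bseq n m = tseq m * n := by
  cases m with
  | zero => rw [bseq, tseq_zero]
  | succ k =>
    show ((-1 : ℝ) ^ (k + 1) * (Nat.factorial (k + 1)) *
      ((∑ j ∈ Finset.range (k + 2), (-1 : ℝ) ^ j / (Nat.factorial j)) - Real.exp (-1)) * n) = _
    rw [tseq]

lemma tseq_succ (m : ℕ) : tseq (m + 1) = 1 - (m + 1) * tseq m := by
  unfold tseq
  rw [Finset.sum_range_succ]
  have h1 : ((-1 : ℝ)) ^ (m + 1) = -(-1) ^ m := by rw [pow_succ]; ring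
  have h2 : ((-1 : ℝ)) ^ m * (-1) ^ m = 1 := by
    rw [← pow_add]; exact Even.neg_one_pow ⟨m, rfl⟩
  have h3 : ((m + 1).factorial : ℝ) = (m + 1) * m.factorial := by
    push_cast [Nat.factorial_succ]; ring
  have h4 : ((m + 1).factorial : ℝ) ≠ 0 := by positivity
  field_simp [h1, h3]
  rw [h1, h3]; linear_combination h2

private lemma auxA (x : ℝ) (hx : 0 ≤ x) :
    (1:ℝ)/(x+1) - 1/((x+2)*(x+1)) + 1/((x+3)*((x+2)*(x+1))) = 1/(x+2) + 1/((x+1)*(x+2)*(x+3)) := by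
  have h1 : x+1 ≠ 0 := by positivity
  have h2 : x+2 ≠ 0 := by positivity
  have h3 : x+3 ≠ 0 := by positivity
  field_simp
  ring

private lemma auxB (P : ℝ) (hP : 0 < P) : 1/P - 1/(2*P) = 1/(2*P) := by
  field_simp
  norm_num

private lemma auxC (P : ℝ) (hP : 0 < P) : 1/P + 1/(2*P) + 1/(2*P) = 2/P := by
  field_simp
  ring

private lemma auxD (x : ℝ) (hx : 0 ≤ x) :
    (1:ℝ)/(x+2) + 2/((x+1)*(x+2)*(x+3)) ≤ 1/(x+1) := by
  have h1 : (1:ℝ)/(x+1) - 1/(x+2) = 1/((x+1)*(x+2)) := by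
    have h2 : x+1 ≠ 0 := by positivity
    have h3 : x+2 ≠ 0 := by positivity
    field_simp
    ring
  have h2 : 2/((x+1)*(x+2)*(x+3)) ≤ 1/((x+1)*(x+2)) := by
    rw [div_le_div_iff₀ (by positivity) (by positivity)]
    nlinarith [mul_pos (by positivity : (0:ℝ) < x+1) (by positivity : (0:ℝ) < x+2)]
  linarith

lemma tseq_bounds (m : ℕ) :
    1 / ((m : ℝ) + 2) + 1 / (2 * ((m:ℝ)+1) * ((m:ℝ)+2) * ((m:ℝ)+3)) ≤ tseq m ∧
    tseq m ≤ 1 / ((m : ℝ) + 1) - 1 / (2 * ((m:ℝ)+1) * ((m:ℝ)+2) * ((m:ℝ)+3)) := by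
  set x : ℝ := (m : ℝ) with hx
  have hx0 : 0 ≤ x := Nat.cast_nonneg m
  set F : ℝ := (m.factorial : ℝ) with hFdef
  have hF : (0:ℝ) < F := by rw [hFdef]; exact_mod_cast m.factorial_pos
  have hFne : F ≠ 0 := hF.ne'
  set u : ℝ := (-1 : ℝ) ^ m with hudef
  have hu : u * u = 1 := by
    rw [hudef, ← pow_add]; exact Even.neg_one_pow ⟨m, rfl⟩
  have hexp := Real.exp_bound (x := (-1:ℝ)) (by norm_num) (n := m + 4) (by omega)
  have f1 : ((m+1).factorial : ℝ) = (x+1) * F := by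
    rw [hFdef]; push_cast [Nat.factorial_succ]; ring
  have f2 : ((m+2).factorial : ℝ) = (x+2) * ((x+1) * F) := by
    rw [hFdef]; push_cast [Nat.factorial_succ]; ring
  have f3 : ((m+3).factorial : ℝ) = (x+3) * ((x+2) * ((x+1) * F)) := by
    rw [hFdef]; push_cast [Nat.factorial_succ]; ring
  have f4 : ((m+4).factorial : ℝ) = (x+4) * ((x+3) * ((x+2) * ((x+1) * F))) := by
    rw [hFdef]; push_cast [Nat.factorial_succ]; ring
  set E : ℝ := Real.exp (-1) with hE
  set S : ℝ := ∑ j ∈ Finset.range (m + 1), (-1 : ℝ) ^ j / (Nat.factorial j) with hS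
  set S3 : ℝ := ∑ j ∈ Finset.range (m + 4), (-1 : ℝ) ^ j / (Nat.factorial j) with hS3
  set ε : ℝ := u * F * (S3 - E) with hε
  set P : ℝ := (x+1) * (x+2) * (x+3) with hP
  clear_value x F u E S S3 ε P
  have hPpos : 0 < P := by rw [hP]; positivity
  -- bound on ε
  have habs1 : |S3 - E| ≤ (x+5) / (((m+4).factorial : ℝ) * (x+4)) := by
    rw [abs_sub_comm]
    refine hexp.trans (le_of_eq ?_)
    simp only [abs_neg, abs_one, one_pow, one_mul, Nat.succ_eq_add_one]
    rw [hx]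
    push_cast
    ring
  have hεb : |ε| ≤ 1 / (2 * P) := by
    have h1 : |ε| = F * |S3 - E| := by
      rw [hε, abs_mul, abs_mul, hudef, abs_pow, abs_neg, abs_one, one_pow, one_mul,
        abs_of_pos hF]
    rw [h1]
    have h2 : F * ((x+5) / (((m+4).factorial : ℝ) * (x+4))) ≤ 1 / (2 * P) := by
      rw [f4, mul_div_assoc', div_le_div_iff₀ (by positivity) (by rw [hP] at hPpos ⊢; positivity)]
      have base : 2*(x+5) ≤ (x+4)^2 := by nlinarith [hx0]
      have hQ : (0:ℝ) ≤ F*(x+1)*(x+2)*(x+3) := by positivity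
      rw [hP]
      nlinarith [mul_le_mul_of_nonneg_left base hQ]
    exact (mul_le_mul_of_nonneg_left habs1 hF.le).trans h2
  -- sum decomposition
  have e1 : ((-1:ℝ)) ^ (m+1) = -u := by rw [hudef, pow_succ]; ring
  have e2 : ((-1:ℝ)) ^ (m+2) = u := by rw [hudef, pow_add]; norm_num
  have e3 : ((-1:ℝ)) ^ (m+3) = -u := by rw [pow_succ, e2]; ring
  have hsum : S3 = S + (-1)^(m+1) / ((m+1).factorial : ℝ)
      + (-1)^(m+2) / ((m+2).factorial : ℝ) + (-1)^(m+3) / ((m+3).factorial : ℝ) := by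
    rw [hS3, hS]
    rw [show m + 4 = (m+3) + 1 by ring, Finset.sum_range_succ,
        show m + 3 = (m+2) + 1 by ring, Finset.sum_range_succ,
        show m + 2 = (m+1) + 1 by ring, Finset.sum_range_succ]
  rw [e1, e2, e3, f1, f2, f3, neg_div, neg_div] at hsum
  have hsum2 : S = S3 + u / ((x+1)*F) - u / ((x+2)*((x+1)*F)) + u / ((x+3)*((x+2)*((x+1)*F))) := by
    linarith [hsum]
  have c1 : F / ((x+1)*F) = 1/(x+1) := by
    rw [show (x+1)*F = F*(x+1) by ring, ← div_div, div_self hFne]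
  have c2 : F / ((x+2)*((x+1)*F)) = 1/((x+2)*(x+1)) := by
    rw [show (x+2)*((x+1)*F) = F*((x+2)*(x+1)) by ring, ← div_div, div_self hFne]
  have c3 : F / ((x+3)*((x+2)*((x+1)*F))) = 1/((x+3)*((x+2)*(x+1))) := by
    rw [show (x+3)*((x+2)*((x+1)*F)) = F*((x+3)*((x+2)*(x+1))) by ring, ← div_div, div_self hFne]
  have key : (1:ℝ)/(x+1) - 1/((x+2)*(x+1)) + 1/((x+3)*((x+2)*(x+1))) = 1/(x+2) + 1/P := by
    rw [hP]; exact auxA x hx0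
  have heq : tseq m = ε + (1/(x+2) + 1/P) := by
    unfold tseq
    rw [← hS, ← hudef, ← hFdef, ← hE]
    have expand : u * F * (S - E)
        = u*F*(S3-E) + (u*u)*(F/((x+1)*F)) - (u*u)*(F/((x+2)*((x+1)*F)))
          + (u*u)*(F/((x+3)*((x+2)*((x+1)*F)))) := by
      rw [hsum2]; ring
    rw [expand, hu, one_mul, one_mul, one_mul, c1, c2, c3, hε]
    linarith [key]
  have hεlo : -(1/(2*P)) ≤ ε := (abs_le.mp hεb).1
  have hεhi : ε ≤ 1/(2*P) := (abs_le.mp hεb).2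
  have hPrw : 2 * (x+1) * (x+2) * (x+3) = 2 * P := by rw [hP]; ring
  rw [hPrw]
  constructor
  · rw [heq]
    linarith [auxB P hPpos]
  · rw [heq]
    have hkey2 : 1/(x+2) + 2/P ≤ 1/(x+1) := by
      rw [hP]; exact auxD x hx0
    linarith [auxC P hPpos]

lemma mod_eq_sub (n a q : ℕ) (h1 : q * a ≤ n) (h2 : n < (q+1) * a) : n % a = n - q * a := by
  have hq : n / a = q := Nat.div_eq_of_lt_le h1 h2
  have h3 : n % a + a * (n / a) = n := Nat.mod_add_div n a
  rw [hq, Nat.mul_comm] at h3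
  omega

lemma core (n m a : ℕ) (hab : |(a:ℝ) - tseq m * n| ≤ (m.factorial : ℝ))
    (hn : 2 * (m+3).factorial < n) :
    (m+1) * a < n ∧ n < (m+2) * a := by
  obtain ⟨hlo, hhi⟩ := tseq_bounds m
  set x : ℝ := (m : ℝ) with hx
  have hx0 : 0 ≤ x := Nat.cast_nonneg m
  have hnR : (2:ℝ) * ((m+3).factorial : ℝ) < n := by exact_mod_cast hn
  have hfact : ((m+3).factorial : ℝ) = (x+1)*(x+2)*(x+3) * (m.factorial : ℝ) := by
    rw [hx]; push_cast [Nat.factorial_succ]; ring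
  have hn0 : (0:ℝ) < n := lt_of_le_of_lt (by positivity) hnR
  have hQ : (0:ℝ) < 2*(x+1)*(x+2)*(x+3) := by positivity
  have hkey : (m.factorial : ℝ) * (2*(x+1)*(x+2)*(x+3)) < n := by
    calc (m.factorial : ℝ) * (2*(x+1)*(x+2)*(x+3))
        = 2 * ((x+1)*(x+2)*(x+3) * (m.factorial : ℝ)) := by ring
      _ < n := by rw [← hfact]; exact hnR
  have hF' : (m.factorial : ℝ) < n / (2*(x+1)*(x+2)*(x+3)) := (lt_div_iff₀ hQ).mpr hkey
  have hA : (a:ℝ) ≤ tseq m * n + m.factorial := by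
    have h := abs_le.mp hab; linarith [h.1, h.2]
  have hB : tseq m * n - m.factorial ≤ a := by
    have h := abs_le.mp hab; linarith [h.1, h.2]
  have ht1 : tseq m * n ≤ (1/(x+1) - 1/(2*(x+1)*(x+2)*(x+3))) * n :=
    mul_le_mul_of_nonneg_right hhi hn0.le
  have ht2 : (1/(x+2) + 1/(2*(x+1)*(x+2)*(x+3))) * n ≤ tseq m * n :=
    mul_le_mul_of_nonneg_right hlo hn0.le
  have e1 : (1/(x+1) - 1/(2*(x+1)*(x+2)*(x+3))) * n
      = n/(x+1) - n/(2*(x+1)*(x+2)*(x+3)) := by ring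
  have e2 : (1/(x+2) + 1/(2*(x+1)*(x+2)*(x+3))) * n
      = n/(x+2) + n/(2*(x+1)*(x+2)*(x+3)) := by ring
  constructor
  · have h1 : (a:ℝ) < n/(x+1) := by rw [e1] at ht1; linarith
    have h2 : ((x:ℝ)+1) * a < n := by
      have := (lt_div_iff₀ (by positivity : (0:ℝ) < x+1)).mp h1
      linarith
    have h3 : (((m+1)*a : ℕ) : ℝ) < (n:ℝ) := by push_cast; rw [← hx] at *; linarith
    exact_mod_cast h3
  · have h1 : (n:ℝ)/(x+2) < a := by rw [e2] at ht2; linarith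
    have h2 : (n:ℝ) < (x+2) * a := by
      have := (div_lt_iff₀ (by positivity : (0:ℝ) < x+2)).mp h1
      linarith
    have h3 : (n:ℝ) < (((m+2)*a : ℕ) : ℝ) := by push_cast; rw [← hx] at *; linarith
    exact_mod_cast h3

lemma exp_neg_one_lt_one : Real.exp (-1) < 1 := Real.exp_lt_one_iff.mpr (by norm_num)

lemma main_ind (n : ℕ) (k : ℕ) (hn : 2 * (k+3).factorial < n) :
    |(pseq n (Nat.floor ((1 - Real.exp (-1)) * n)) k : ℝ) - tseq k * n| ≤ (k.factorial : ℝ) ∧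
    (k+1) * pseq n (Nat.floor ((1 - Real.exp (-1)) * n)) k < n ∧
    n < (k+2) * pseq n (Nat.floor ((1 - Real.exp (-1)) * n)) k := by
  induction k with
  | zero =>
    have hb0 : (0:ℝ) ≤ (1 - Real.exp (-1)) * n := by
      have h := exp_neg_one_lt_one
      have h2 : (0:ℝ) ≤ 1 - Real.exp (-1) := by linarith
      positivity
    have habs : |(pseq n (Nat.floor ((1 - Real.exp (-1)) * n)) 0 : ℝ) - tseq 0 * n|
        ≤ ((Nat.factorial 0 : ℕ) : ℝ) := by
      show |((Nat.floor ((1 - Real.exp (-1)) * n) : ℕ) : ℝ) - tseq 0 * n| ≤ _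
      rw [tseq_zero]
      have h1 := Nat.floor_le hb0
      have h2 := Nat.lt_floor_add_one ((1 - Real.exp (-1)) * n)
      have h3 : ((Nat.factorial 0 : ℕ) : ℝ) = 1 := by norm_num [Nat.factorial]
      rw [h3, abs_le]
      constructor <;> linarith
    exact ⟨habs, core n 0 _ habs hn⟩
  | succ k ih =>
    have hk : 2 * (k+3).factorial < n := by
      have hmono : (k+3).factorial ≤ (k+1+3).factorial := Nat.factorial_le (by omega)
      omega
    obtain ⟨h1, h2, h3⟩ := ih hk
    set A := Nat.floor ((1 - Real.exp (-1)) * n) with hA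
    set a := pseq n A k with ha
    have hrec : pseq n A (k+1) = n - (k+1)*a := by
      show n % a = n - (k+1)*a
      exact mod_eq_sub n a (k+1) h2.le h3
    have habs : |(pseq n A (k+1) : ℝ) - tseq (k+1) * n| ≤ ((k+1).factorial : ℝ) := by
      rw [hrec]
      have hle : (k+1)*a ≤ n := h2.le
      have hcast : ((n - (k+1)*a : ℕ) : ℝ) = (n:ℝ) - ((k:ℝ)+1)*a := by
        rw [Nat.cast_sub hle]; push_cast; ring
      rw [hcast, tseq_succ]
      have hdiff : (n:ℝ) - ((k:ℝ)+1)*a - (1 - ((k:ℝ)+1)*tseq k)*n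
          = -((((k:ℝ)+1)) * ((a:ℝ) - tseq k * n)) := by push_cast; ring
      rw [hdiff, abs_neg, abs_mul, abs_of_pos (by positivity : (0:ℝ) < (k:ℝ)+1)]
      calc ((k:ℝ)+1) * |(a:ℝ) - tseq k * n|
          ≤ ((k:ℝ)+1) * (k.factorial : ℝ) := by
            exact mul_le_mul_of_nonneg_left h1 (by positivity)
        _ = ((k+1).factorial : ℝ) := by push_cast [Nat.factorial_succ]; ring
    exact ⟨habs, core n (k+1) _ habs hn⟩

theorem stmt_9 : ∃ c > (0:ℝ), ∃ N : ℕ, ∀ n : ℕ, N ≤ n →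
    ∀ k : ℕ, (k : ℝ) ≤ c * Real.log n / Real.log (Real.log n) →
    let a := Nat.floor ((1 - Real.exp (-1)) * n)
    |(pseq n a k : ℝ) - bseq n k| ≤ (Nat.factorial k) ∧
    pseq n a (k + 1) = n - (k + 1) * pseq n a k ∧
    (n : ℝ) / (k + 2) < (pseq n a k : ℝ) ∧ (0:ℝ) < (n : ℝ) / (k + 2) := by
  refine ⟨1/2, by norm_num, 3^450, fun n hn k hk => ?_⟩
  intro a
  have hnpos : 0 < n := lt_of_lt_of_le (by positivity) hn
  have hnR : ((3:ℝ))^450 ≤ (n:ℝ) := by exact_mod_cast hn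
  set L : ℝ := Real.log n with hL
  set LL : ℝ := Real.log L with hLL
  clear_value L LL
  have hnR0 : (0:ℝ) < n := by exact_mod_cast hnpos
  have hlog3 : (1:ℝ) ≤ Real.log 3 := by
    rw [Real.le_log_iff_exp_le (by norm_num)]
    linarith [Real.exp_one_lt_d9]
  have hL196 : (196:ℝ) ≤ L := by
    have h1 : Real.log ((3:ℝ)^450) ≤ L := by
      rw [hL]; exact Real.log_le_log (by positivity) hnR
    rw [Real.log_pow] at h1
    have : (450:ℝ) * 1 ≤ (450:ℝ) * Real.log 3 := by linarith
    push_cast at h1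
    linarith
  clear hn hnR
  have hLL1 : (1:ℝ) ≤ LL := by
    rw [hLL, Real.le_log_iff_exp_le (by linarith)]
    linarith [Real.exp_one_lt_d9]
  have hLLpos : (0:ℝ) < LL := by linarith
  have hk' : (k:ℝ) ≤ L / (2*LL) := by
    have : (1:ℝ)/2 * L / LL = L / (2*LL) := by ring
    rw [← this]
    exact hk
  have hkhalf : (k:ℝ) ≤ L/2 := by
    have h1 : L/(2*LL) ≤ L/2 := by
      gcongr
      all_goals linarith
    linarith
  have hkL : (k:ℝ) + 3 ≤ L := by linarith
  -- key factorial bound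
  have hfac : 2 * (k+3).factorial < n := by
    have hfle : (((k+3).factorial : ℕ) : ℝ) ≤ (((k:ℝ)+3))^(k+3) := by
      have := Nat.factorial_le_pow (k+3)
      calc (((k+3).factorial : ℕ) : ℝ) ≤ (((k+3)^(k+3) : ℕ) : ℝ) := by exact_mod_cast this
        _ = (((k:ℝ)+3))^(k+3) := by push_cast; ring
    have hfpos : (0:ℝ) < (((k+3).factorial : ℕ) : ℝ) := by
      exact_mod_cast (k+3).factorial_pos
    have hlogf : Real.log (((k+3).factorial : ℕ) : ℝ) ≤ ((k:ℝ)+3) * Real.log ((k:ℝ)+3) := by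
      calc Real.log (((k+3).factorial : ℕ) : ℝ)
          ≤ Real.log ((((k:ℝ)+3))^(k+3)) := Real.log_le_log hfpos hfle
        _ = ((k+3 : ℕ) : ℝ) * Real.log ((k:ℝ)+3) := Real.log_pow _ _
        _ = ((k:ℝ)+3) * Real.log ((k:ℝ)+3) := by push_cast; ring
    have hlogk3 : Real.log ((k:ℝ)+3) ≤ LL := by
      rw [hLL]
      exact Real.log_le_log (by positivity) hkL
    have hchain : ((k:ℝ)+3) * Real.log ((k:ℝ)+3) ≤ L/2 + 3*LL := by
      have s1 : ((k:ℝ)+3) * Real.log ((k:ℝ)+3) ≤ ((k:ℝ)+3) * LL :=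
        mul_le_mul_of_nonneg_left hlogk3 (by positivity)
      have s2 : ((k:ℝ)+3) * LL ≤ (L/(2*LL) + 3) * LL :=
        mul_le_mul_of_nonneg_right (by linarith) (by linarith)
      have s3 : (L/(2*LL) + 3) * LL = L/2 + 3*LL := by
        have hne : LL ≠ 0 := hLLpos.ne'
        field_simp
      linarith
    have hlog2 : Real.log 2 ≤ 1 := by
      have := Real.log_le_sub_one_of_pos (by norm_num : (0:ℝ) < 2)
      linarith
    have hs14 : (14:ℝ) ≤ Real.sqrt L := by
      rw [Real.le_sqrt (by norm_num) (by linarith)]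
      norm_num
      linarith
    have hLsq : Real.sqrt L ^ 2 = L := Real.sq_sqrt (by linarith)
    have hLL2 : LL ≤ 2 * Real.sqrt L := by
      have hp1 : Real.log (Real.sqrt L) = Real.log L / 2 := Real.log_sqrt (by linarith)
      have hp2 : Real.log (Real.sqrt L) ≤ Real.sqrt L - 1 :=
        Real.log_le_sub_one_of_pos (Real.sqrt_pos.mpr (by linarith))
      rw [hLL]
      linarith
    have hfinal : Real.log 2 + (L/2 + 3*LL) < L := by
      nlinarith [hs14, hLsq, hLL2, hlog2, sq_nonneg (Real.sqrt L - 14)]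
    have hlogall : Real.log ((2:ℝ) * (((k+3).factorial : ℕ) : ℝ)) < L := by
      rw [Real.log_mul (by norm_num) hfpos.ne']
      linarith [hlogf, hchain]
    have hreal : (2:ℝ) * (((k+3).factorial : ℕ) : ℝ) < n := by
      have hx : (0:ℝ) < (2:ℝ) * (((k+3).factorial : ℕ) : ℝ) := by positivity
      rw [hL] at hlogall
      exact (Real.log_lt_log_iff hx hnR0).mp hlogall
    exact_mod_cast hreal
  obtain ⟨h1, h2, h3⟩ := main_ind n k hfac
  have haA : a = Nat.floor ((1 - Real.exp (-1)) * n) := rfl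
  refine ⟨?_, ?_, ?_, ?_⟩
  · rw [bseq_eq, haA]; exact h1
  · show n % pseq n a k = n - (k + 1) * pseq n a k
    rw [haA] at *
    exact mod_eq_sub n _ (k+1) h2.le h3
  · rw [div_lt_iff₀ (by positivity : (0:ℝ) < (k:ℝ)+2)]
    rw [haA]
    have : (n:ℝ) < (((k+2) * pseq n (Nat.floor ((1 - Real.exp (-1)) * n)) k : ℕ) : ℝ) := by
      exact_mod_cast h3
    push_cast at this
    linarith
  · positivity
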